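/- For a Hermitian PSD matrix E with Tr(E) = M, the rank-one condition rank(E) = 1 is equivalent to det(I + E) ≤ 1 + M (equivalently log det(I + E) ≤ log(1 + M)). -/

import Mathlib

open Matrix
open scoped ComplexOrder

private lemma one_add_sum_le_prod {ι : Type*} (s : Finset ι) (f : ι → ℝ)
    (h : ∀ i ∈ s, 0 ≤ f i) : 1 + ∑ i ∈ s, f i ≤ ∏ i ∈ s, (1 + f i) := by
  classical
  induction s using Finset.cons_induction with
  | empty => simp
  | cons a s ha ih =>
    rw [Finset.sum_cons, Finset.prod_cons]
    have h1 : 0 ≤ f a := h a (Finset.mem_cons_self a s)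
    have h2 : 1 + ∑ i ∈ s, f i ≤ ∏ i ∈ s, (1 + f i) :=
      ih fun i hi => h i (Finset.mem_cons_of_mem hi)
    have h3 : 0 ≤ ∑ i ∈ s, f i := Finset.sum_nonneg fun i hi => h i (Finset.mem_cons_of_mem hi)
    nlinarith

private lemma one_add_sum_lt_prod {ι : Type*} [Fintype ι] [DecidableEq ι] (f : ι → ℝ)
    (h : ∀ i, 0 ≤ f i) {i j : ι} (hij : i ≠ j) (hi : 0 < f i) (hj : 0 < f j) :
    1 + ∑ k, f k < ∏ k, (1 + f k) := by
  have hjmem : j ∈ Finset.univ.erase i := Finset.mem_erase.2 ⟨(Ne.symm hij), Finset.mem_univ j⟩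
  have hprod : ∏ k, (1 + f k) = (1 + f i) * ((1 + f j) * ∏ k ∈ (Finset.univ.erase i).erase j, (1 + f k)) := by
    rw [Finset.mul_prod_erase _ (fun k => 1 + f k) hjmem,
      Finset.mul_prod_erase _ (fun k => 1 + f k) (Finset.mem_univ i)]
  have hsum : ∑ k, f k = f i + (f j + ∑ k ∈ (Finset.univ.erase i).erase j, f k) := by
    rw [Finset.add_sum_erase _ f hjmem, Finset.add_sum_erase _ f (Finset.mem_univ i)]
  have h1 : 1 + ∑ k ∈ (Finset.univ.erase i).erase j, f k ≤ ∏ k ∈ (Finset.univ.erase i).erase j, (1 + f k) :=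
    one_add_sum_le_prod _ f fun k _ => h k
  have h2 : 0 ≤ ∑ k ∈ (Finset.univ.erase i).erase j, f k := Finset.sum_nonneg fun k _ => h k
  rw [hprod, hsum]
  nlinarith [mul_pos hi hj]

theorem rank_one_iff_det_le {M : ℕ}
    (E : Matrix (Fin M) (Fin M) ℂ) (hE : E.PosSemidef)
    (htr : E.trace = (M : ℂ)) (hne : E ≠ 0) :
    E.rank = 1 ↔ (1 + E).det ≤ 1 + (M : ℂ) := by
  classical
  have hH := hE.1
  set lam := hH.eigenvalues with hlam
  have hnn : ∀ i, 0 ≤ lam i := hE.eigenvalues_nonneg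
  have hUU : (hH.eigenvectorUnitary : Matrix (Fin M) (Fin M) ℂ) * star (hH.eigenvectorUnitary : Matrix (Fin M) (Fin M) ℂ) = 1 :=
    (Matrix.mem_unitaryGroup_iff).mp hH.eigenvectorUnitary.2
  have hUU' : star (hH.eigenvectorUnitary : Matrix (Fin M) (Fin M) ℂ) * (hH.eigenvectorUnitary : Matrix (Fin M) (Fin M) ℂ) = 1 :=
    (Matrix.mem_unitaryGroup_iff').mp hH.eigenvectorUnitary.2
  -- trace = sum of eigenvalues
  have htr' : ∑ i, lam i = (M : ℝ) := by
    have h1 : E.trace = ∑ i, (lam i : ℂ) := by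
      conv_lhs => rw [hH.spectral_theorem, Unitary.conjStarAlgAut_apply]
      rw [Matrix.trace_mul_cycle, hUU', one_mul, Matrix.trace_diagonal]
      simp [hlam]
    rw [h1] at htr
    exact_mod_cast htr
  -- determinant formula
  have hdet : (1 + E).det = ((∏ i, (1 + lam i) : ℝ) : ℂ) := by
    have h1 : (1 : Matrix (Fin M) (Fin M) ℂ) + E
        = (hH.eigenvectorUnitary : Matrix (Fin M) (Fin M) ℂ) * (diagonal (fun i => 1 + (lam i : ℂ)))
          * star (hH.eigenvectorUnitary : Matrix (Fin M) (Fin M) ℂ) := by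
      conv_lhs => rw [hH.spectral_theorem, Unitary.conjStarAlgAut_apply]
      have : (diagonal (fun i => 1 + (lam i : ℂ)))
          = 1 + diagonal (RCLike.ofReal ∘ lam) := by
        rw [← Matrix.diagonal_one, Matrix.diagonal_add]
        rfl
      rw [this, mul_add, add_mul, mul_one, hUU]
    rw [h1, Matrix.det_mul_right_comm, hUU, one_mul, Matrix.det_diagonal]
    push_cast
    ring
  -- M ≥ 1
  have hM : 0 < M := by
    rcases Nat.eq_zero_or_pos M with h0 | h
    · subst h0
      exact absurd (by ext i j; exact i.elim0) hne
    · exact h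
  -- rank = number of nonzero eigenvalues
  have hrank : E.rank = Fintype.card {i // lam i ≠ 0} := hH.rank_eq_card_non_zero_eigs
  -- some eigenvalue is positive
  have hex : ∃ i, 0 < lam i := by
    by_contra hc
    push_neg at hc
    have : ∀ i, lam i = 0 := fun i => le_antisymm (hc i) (hnn i)
    have : (M : ℝ) = 0 := by rw [← htr']; simp [this]
    exact_mod_cast absurd this (by positivity)
  have hle : (1 + E).det ≤ 1 + (M : ℂ) ↔ ∏ i, (1 + lam i) ≤ 1 + (M : ℝ) := by
    rw [hdet]
    have : (1 : ℂ) + (M : ℂ) = ((1 + (M : ℝ) : ℝ) : ℂ) := by push_cast; ring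
    rw [this, Complex.real_le_real]
  rw [hle, hrank]
  constructor
  · intro h1
    -- exactly one nonzero eigenvalue
    obtain ⟨⟨i0, hi0⟩, huniq⟩ := Fintype.card_eq_one_iff.mp h1
    have hz : ∀ k, k ≠ i0 → lam k = 0 := by
      intro k hk
      by_contra hc
      exact hk (congrArg Subtype.val (huniq ⟨k, hc⟩))
    have hprod : ∏ i, (1 + lam i) = 1 + lam i0 := by
      rw [← Finset.mul_prod_erase _ _ (Finset.mem_univ i0)]
      rw [Finset.prod_eq_one, mul_one]
      intro k hk
      rw [hz k (Finset.mem_erase.1 hk).1, add_zero]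
    have hsum : ∑ i, lam i = lam i0 := by
      rw [← Finset.add_sum_erase _ _ (Finset.mem_univ i0)]
      rw [Finset.sum_eq_zero, add_zero]
      intro k hk
      exact hz k (Finset.mem_erase.1 hk).1
    rw [hprod, ← htr', hsum]
  · intro h1
    obtain ⟨i0, hi0⟩ := hex
    refine Fintype.card_eq_one_iff.mpr ⟨⟨i0, ne_of_gt hi0⟩, ?_⟩
    rintro ⟨j, hj⟩
    refine Subtype.ext ?_
    show j = i0
    by_contra hc
    have hjpos : 0 < lam j := lt_of_le_of_ne (hnn j) (Ne.symm hj)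
    have := one_add_sum_lt_prod lam hnn hc hjpos hi0
    rw [htr'] at this
    exact absurd h1 (not_le.mpr this)
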